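/- arXiv:1711.08934 — 3 statements merged into one kernel-verified Lean document; each statement's English description precedes it below -/
import Mathlib

section
/- Let t ∈ (−1,1) \ {0}, and define γ_t : [0, 2π) → S² by γ_t(θ) = (√(1−t²) cos θ, √(1−t²) sin θ, t). For θ ∈ [0, 2π) let V_θ^t = γ_t(θ)^⊥, let π_θ^t be the orthogonal projection of ℝ³ onto V_θ^t, and write π_θ = π_θ^{1/√2}, V_θ = V_θ^{1/√2}. Then there exists an invertible linear map B_t : ℝ³ → ℝ³ depending only on t, and for each θ an invertible linear map A_θ^t : V_θ → V_θ^t, such that π_θ^t = A_θ^t ∘ π_θ ∘ B_t for all θ ∈ [0, 2π). Moreover one may take B_t(x, y, r) = (x, y, r√(1−t²)/t). -/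
open MeasureTheory Metric Real

/-- `ℝ³` as a Euclidean space. -/
noncomputable abbrev E3 := EuclideanSpace ℝ (Fin 3)

/-- The vector `(a, b, c) ∈ ℝ³`. -/
noncomputable def vec3 (a b c : ℝ) : E3 := (WithLp.equiv 2 (Fin 3 → ℝ)).symm ![a, b, c]

/-- The unit vector `γ_t(θ) = (√(1−t²) cos θ, √(1−t²) sin θ, t)`. -/
noncomputable def gammaT (t θ : ℝ) : E3 :=
  vec3 (Real.sqrt (1 - t ^ 2) * Real.cos θ) (Real.sqrt (1 - t ^ 2) * Real.sin θ) t

lemma vec3_apply0 (a b c : ℝ) : vec3 a b c 0 = a := rfl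
lemma vec3_apply1 (a b c : ℝ) : vec3 a b c 1 = b := rfl
lemma vec3_apply2 (a b c : ℝ) : vec3 a b c 2 = c := rfl

/-- Scaling the third coordinate by a nonzero constant, as a linear equivalence. -/
noncomputable def Bequiv (c : ℝ) (hc : c ≠ 0) : E3 ≃ₗ[ℝ] E3 where
  toFun z := vec3 (z 0) (z 1) (z 2 * c)
  invFun z := vec3 (z 0) (z 1) (z 2 * c⁻¹)
  map_add' x y := by
    ext i
    fin_cases i <;>
      simp [vec3, PiLp.add_apply] <;> ring
  map_smul' r x := by
    ext i
    fin_cases i <;>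
      simp [vec3, PiLp.smul_apply, smul_eq_mul] <;> ring
  left_inv z := by
    ext i
    fin_cases i <;>
      simp [vec3] <;> field_simp
  right_inv z := by
    ext i
    fin_cases i <;>
      simp [vec3] <;> field_simp

lemma vec3_smul (r a b c : ℝ) : r • vec3 a b c = vec3 (r * a) (r * b) (r * c) := by
  ext i
  fin_cases i <;> rfl

lemma Bequiv_apply (c : ℝ) (hc : c ≠ 0) (z : E3) :
    Bequiv c hc z = vec3 (z 0) (z 1) (z 2 * c) := rfl

/-- For `t ∈ (−1,1) \ {0}` there is an invertible linear `B_t : ℝ³ → ℝ³`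
(given by `B_t(x,y,r) = (x, y, r√(1−t²)/t)`), and for each `θ ∈ [0,2π)` an invertible linear
`A_θ^t : V_θ → V_θ^t` (where `V_θ^t = γ_t(θ)^⊥` and `V_θ = V_θ^{1/√2}`), such that
`π_θ^t = A_θ^t ∘ π_θ ∘ B_t`. -/
theorem stmt3 (t : ℝ) (ht : t ∈ Set.Ioo (-1 : ℝ) 1) (ht0 : t ≠ 0) :
    ∃ B : E3 ≃ₗ[ℝ] E3,
      (∀ z : E3, B z = vec3 (z 0) (z 1) (z 2 * Real.sqrt (1 - t ^ 2) / t)) ∧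
      ∀ θ ∈ Set.Ico (0 : ℝ) (2 * π),
        ∃ A : (ℝ ∙ gammaT (Real.sqrt 2)⁻¹ θ)ᗮ ≃ₗ[ℝ] (ℝ ∙ gammaT t θ)ᗮ,
          ∀ z : E3,
            Submodule.orthogonalProjection (ℝ ∙ gammaT t θ)ᗮ z
              = A (Submodule.orthogonalProjection (ℝ ∙ gammaT (Real.sqrt 2)⁻¹ θ)ᗮ (B z)) := by
  have ht2 : (0 : ℝ) < 1 - t ^ 2 := by nlinarith [ht.1, ht.2]
  set s : ℝ := Real.sqrt (1 - t ^ 2) with hs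
  have hs0 : 0 < s := Real.sqrt_pos.mpr ht2
  have hcne : s / t ≠ 0 := div_ne_zero hs0.ne' ht0
  have h2 : (0:ℝ) < Real.sqrt 2 := Real.sqrt_pos.mpr (by norm_num)
  refine ⟨Bequiv (s / t) hcne, ?_, ?_⟩
  · intro z
    rw [Bequiv_apply, mul_div_assoc]
  intro θ hθ
  set B := Bequiv (s / t) hcne with hB
  set v : E3 := gammaT (Real.sqrt 2)⁻¹ θ with hv
  set w : E3 := gammaT t θ with hw
  set c : ℝ := Real.sqrt 2 * s with hc
  have hcne' : c ≠ 0 := mul_ne_zero h2.ne' hs0.ne'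
  -- the square root occurring in v
  have h12 : (1:ℝ) - ((Real.sqrt 2)⁻¹) ^ 2 = 2⁻¹ := by
    rw [inv_pow, Real.sq_sqrt (by norm_num : (0:ℝ) ≤ 2)]
    norm_num
  have hsq : Real.sqrt (1 - ((Real.sqrt 2)⁻¹) ^ 2) = (Real.sqrt 2)⁻¹ := by
    rw [h12, Real.sqrt_inv]
  -- key computation: B w = c • v
  have hBw : B w = c • v := by
    have h0 : B w = vec3 (s * Real.cos θ) (s * Real.sin θ) (t * (s / t)) := rfl
    rw [h0, hv]
    simp only [gammaT, hsq, vec3_smul]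
    have e : ∀ a b c' a' b' c'' : ℝ, a = a' → b = b' → c' = c'' →
        vec3 a b c' = vec3 a' b' c'' := by
      rintro a b c' a' b' c'' rfl rfl rfl; rfl
    refine e _ _ _ _ _ _ ?_ ?_ ?_ <;> rw [hc] <;> field_simp <;> ring
  have hmap : ∀ a : ℝ, B (a • w) = (a * c) • v := by
    intro a
    rw [_root_.map_smul, hBw, smul_smul]
  -- membership transfer
  have hmem : ∀ u : E3, B.symm u ∈ (ℝ ∙ w) ↔ u ∈ (ℝ ∙ v) := by
    intro u
    constructor
    · rintro h
      rcases Submodule.mem_span_singleton.mp h with ⟨a, ha⟩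
      have : u = (a * c) • v := by
        rw [← hmap a, ha, B.apply_symm_apply]
      rw [this]
      exact Submodule.mem_span_singleton.mpr ⟨a * c, rfl⟩
    · rintro h
      rcases Submodule.mem_span_singleton.mp h with ⟨a, ha⟩
      have hw' : B.symm v = c⁻¹ • w := by
        have : B (c⁻¹ • w) = v := by
          rw [hmap, inv_mul_cancel₀ hcne', one_smul]
        rw [← this, B.symm_apply_apply]
      have : B.symm u = (a * c⁻¹) • w := by
        rw [← ha, _root_.map_smul, hw', smul_smul]
      rw [this]
      exact Submodule.mem_span_singleton.mpr ⟨a * c⁻¹, rfl⟩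
  have hvne : v ≠ 0 := by
    intro h
    have : v 2 = 0 := by rw [h]; rfl
    rw [hv] at this
    simp only [gammaT, vec3_apply2] at this
    exact (inv_ne_zero h2.ne') this
  have hwne : w ≠ 0 := by
    intro h
    have : w 2 = 0 := by rw [h]; rfl
    rw [hw] at this
    simp only [gammaT, vec3_apply2] at this
    exact ht0 this
  -- the linear map A₀
  set A₀ : ((ℝ ∙ v)ᗮ : Submodule ℝ E3) →ₗ[ℝ] ((ℝ ∙ w)ᗮ : Submodule ℝ E3) :=
    (Submodule.orthogonalProjection (ℝ ∙ w)ᗮ).toLinearMap.comp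
      (B.symm.toLinearMap.comp ((ℝ ∙ v)ᗮ).subtype) with hA₀
  have hA₀apply : ∀ u : ((ℝ ∙ v)ᗮ : Submodule ℝ E3),
      A₀ u = Submodule.orthogonalProjection (ℝ ∙ w)ᗮ (B.symm (u : E3)) := fun u => rfl
  -- main identity
  have hmain : ∀ z : E3,
      Submodule.orthogonalProjection (ℝ ∙ w)ᗮ z = A₀ (Submodule.orthogonalProjection (ℝ ∙ v)ᗮ (B z)) := by
    intro z
    rw [hA₀apply]
    have hsplit : ((Submodule.orthogonalProjection (ℝ ∙ v) (B z) : E3))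
        + ((Submodule.orthogonalProjection (ℝ ∙ v)ᗮ (B z) : E3)) = B z :=
      Submodule.starProjection_add_starProjection_orthogonal (K := ℝ ∙ v) (B z)
    have hcoe : ((Submodule.orthogonalProjection (ℝ ∙ v)ᗮ (B z) : E3))
        = B z - (Submodule.orthogonalProjection (ℝ ∙ v) (B z) : E3) := by
      linear_combination (norm := module) hsplit
    rw [hcoe, map_sub, B.symm_apply_apply]
    have hp : B.symm ((Submodule.orthogonalProjection (ℝ ∙ v) (B z) : E3)) ∈ (ℝ ∙ w) :=
      (hmem _).mpr (Submodule.orthogonalProjection (ℝ ∙ v) (B z)).2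
    have hp' : B.symm ((Submodule.orthogonalProjection (ℝ ∙ v) (B z) : E3)) ∈ ((ℝ ∙ w)ᗮ)ᗮ := by
      rw [Submodule.orthogonal_orthogonal]; exact hp
    rw [map_sub, Submodule.orthogonalProjectionOnto_apply_of_mem_orthogonal hp', sub_zero]
  -- injectivity
  have hinj : Function.Injective A₀ := by
    rw [injective_iff_map_eq_zero]
    intro u hu
    rw [hA₀apply] at hu
    have h1 : B.symm (u : E3) ∈ ((ℝ ∙ w)ᗮ)ᗮ := by
      have : ((Submodule.orthogonalProjection (ℝ ∙ w)ᗮ (B.symm (u : E3)) : E3))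
          + ((Submodule.orthogonalProjection ((ℝ ∙ w)ᗮ)ᗮ (B.symm (u : E3)) : E3))
          = B.symm (u : E3) :=
        Submodule.starProjection_add_starProjection_orthogonal (K := (ℝ ∙ w)ᗮ) (B.symm (u : E3))
      rw [hu] at this
      simp only [ZeroMemClass.coe_zero, zero_add] at this
      rw [← this]
      exact (Submodule.orthogonalProjection ((ℝ ∙ w)ᗮ)ᗮ (B.symm (u : E3))).2
    rw [Submodule.orthogonal_orthogonal] at h1
    have h2' : (u : E3) ∈ (ℝ ∙ v) := (hmem _).mp h1
    have h3 : (u : E3) = 0 := by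
      have := u.2
      rw [Submodule.mem_orthogonal] at this
      have h4 := this (u : E3) h2'
      exact inner_self_eq_zero.mp h4
    exact Subtype.ext h3
  -- dimensions
  have hrank : Module.finrank ℝ ((ℝ ∙ v)ᗮ : Submodule ℝ E3)
      = Module.finrank ℝ ((ℝ ∙ w)ᗮ : Submodule ℝ E3) := by
    have h1 := Submodule.finrank_add_finrank_orthogonal (𝕜 := ℝ) (ℝ ∙ v)
    have h2 := Submodule.finrank_add_finrank_orthogonal (𝕜 := ℝ) (ℝ ∙ w)
    rw [finrank_span_singleton hvne] at h1
    rw [finrank_span_singleton hwne] at h2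
    omega
  exact ⟨A₀.linearEquivOfInjective hinj hrank, fun z => by
    rw [LinearMap.linearEquivOfInjective_apply, hmain]⟩
end

section
/- There exists an absolute constant C ≥ 1 with the following property. Let z ∈ ℝ³ with |z| = 1, let δ > 0, and suppose θ₁, θ₂ ∈ [0, 2π) satisfy |π_{θ₁}(z)| ≤ δ and |π_{θ₂}(z)| ≤ δ, where π_θ is the orthogonal projection of ℝ³ onto the plane orthogonal to γ(θ) = (cos θ, sin θ, 1)/√2. Then |(cos θ₁, sin θ₁, 1) − (cos θ₂, sin θ₂, 1)| ≤ Cδ. -/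
open MeasureTheory Metric Real

/-- The unit vector `γ(θ) = (cos θ, sin θ, 1)/√2`. -/
noncomputable def gam (θ : ℝ) : E3 := (Real.sqrt 2)⁻¹ • vec3 (Real.cos θ) (Real.sin θ) 1

/-- The orthogonal projection `π_θ` of `ℝ³` onto the plane `γ(θ)^⊥`,
viewed as a map `ℝ³ → ℝ³`. -/
noncomputable def projθ (θ : ℝ) (z : E3) : E3 := (Submodule.orthogonalProjectionOnto (ℝ ∙ gam θ)ᗮ z : E3)

lemma norm_vec3 (θ : ℝ) : ‖vec3 (Real.cos θ) (Real.sin θ) 1‖ = Real.sqrt 2 := by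
  rw [show ((2:ℝ) = Real.cos θ ^2 + Real.sin θ ^2 + 1^2) by rw [Real.cos_sq_add_sin_sq]; ring]
  rw [vec3, EuclideanSpace.norm_eq]
  congr 1
  simp [Fin.sum_univ_three, sq_abs]

lemma norm_gam (θ : ℝ) : ‖gam θ‖ = 1 := by
  rw [gam, norm_smul, norm_vec3]
  rw [Real.norm_eq_abs, abs_of_nonneg (by positivity : (0:ℝ) ≤ (Real.sqrt 2)⁻¹)]
  exact inv_mul_cancel₀ (by positivity)

lemma gam_coord (θ : ℝ) : gam θ 2 = (Real.sqrt 2)⁻¹ := by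
  simp [gam, vec3]

lemma proj_eq (θ : ℝ) (z : E3) :
    projθ θ z = z - (inner ℝ (gam θ) z : ℝ) • gam θ := by
  have h := Submodule.starProjection_add_starProjection_orthogonal (K := ℝ ∙ gam θ) z
  rw [projθ, Submodule.coe_orthogonalProjectionOnto_apply, ← Submodule.starProjection_unit_singleton (𝕜 := ℝ) (norm_gam θ) z]
  exact eq_sub_of_add_eq' h

lemma norm_proj_sq (θ : ℝ) (z : E3) (hz : ‖z‖ = 1) :
    ‖projθ θ z‖ ^ 2 = 1 - (inner ℝ (gam θ) z : ℝ) ^ 2 := by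
  rw [proj_eq, norm_sub_sq_real, hz, norm_smul, norm_gam, real_inner_smul_right,
    real_inner_comm]
  simp [abs_sq, mul_pow, sq_abs]
  ring

lemma abs_coord_le_norm (v : E3) (i : Fin 3) : |v i| ≤ ‖v‖ := by
  have h := abs_real_inner_le_norm (EuclideanSpace.single i (1:ℝ)) v
  rw [EuclideanSpace.inner_single_left, EuclideanSpace.norm_single] at h
  simpa using h

/-- There is an absolute constant `C ≥ 1` such that whenever `|z| = 1`,
`δ > 0`, and `θ₁, θ₂ ∈ [0, 2π)` satisfy `|π_{θ₁}(z)| ≤ δ` and `|π_{θ₂}(z)| ≤ δ`, then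
`|(cos θ₁, sin θ₁, 1) − (cos θ₂, sin θ₂, 1)| ≤ Cδ`. -/
theorem stmt7 :
    ∃ C : ℝ, 1 ≤ C ∧
      ∀ z : E3, ‖z‖ = 1 → ∀ δ : ℝ, 0 < δ →
        ∀ θ₁ ∈ Set.Ico (0 : ℝ) (2 * π), ∀ θ₂ ∈ Set.Ico (0 : ℝ) (2 * π),
          ‖projθ θ₁ z‖ ≤ δ → ‖projθ θ₂ z‖ ≤ δ →
            ‖vec3 (Real.cos θ₁) (Real.sin θ₁) 1 - vec3 (Real.cos θ₂) (Real.sin θ₂) 1‖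
              ≤ C * δ := by
  refine ⟨30, by norm_num, ?_⟩
  intro z hz δ hδ θ₁ _ θ₂ _ h1 h2
  set a : ℝ := inner ℝ (gam θ₁) z with ha
  set b : ℝ := inner ℝ (gam θ₂) z with hb
  have hs2 : Real.sqrt 2 ≤ 1.5 := by
    rw [show (1.5:ℝ) = Real.sqrt (1.5^2) from (Real.sqrt_sq (by norm_num)).symm]
    exact Real.sqrt_le_sqrt (by norm_num)
  have hs2' : (1:ℝ) ≤ Real.sqrt 2 := by
    rw [show (1:ℝ) = Real.sqrt 1 from (Real.sqrt_one).symm]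
    exact Real.sqrt_le_sqrt (by norm_num)
  have hv : ∀ θ, vec3 (Real.cos θ) (Real.sin θ) 1 = Real.sqrt 2 • gam θ := by
    intro θ
    rw [gam, smul_smul, mul_inv_cancel₀ (by positivity), one_smul]
  have htarget : ‖vec3 (Real.cos θ₁) (Real.sin θ₁) 1 - vec3 (Real.cos θ₂) (Real.sin θ₂) 1‖
      = Real.sqrt 2 * ‖gam θ₁ - gam θ₂‖ := by
    rw [hv, hv, ← smul_sub, norm_smul, Real.norm_eq_abs,
      abs_of_nonneg (Real.sqrt_nonneg 2)]
  by_cases hδ1 : δ ≤ 1/10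
  · -- small δ
    have h1sq : 1 - a ^ 2 ≤ δ ^ 2 := by
      have hp := norm_proj_sq θ₁ z hz
      nlinarith [norm_nonneg (projθ θ₁ z)]
    have hA : (9:ℝ)/10 ≤ |a| := by
      nlinarith [sq_abs a, abs_nonneg a]
    have hane : a ≠ 0 := by
      intro h; rw [h] at hA; simp at hA; linarith
    have hD : ‖a • gam θ₁ - b • gam θ₂‖ ≤ 2 * δ := by
      have hEq : a • gam θ₁ - b • gam θ₂ = projθ θ₂ z - projθ θ₁ z := by
        rw [proj_eq, proj_eq, ha, hb]; abel
      rw [hEq]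
      calc ‖projθ θ₂ z - projθ θ₁ z‖ ≤ ‖projθ θ₂ z‖ + ‖projθ θ₁ z‖ := norm_sub_le _ _
        _ ≤ 2 * δ := by linarith
    have hcoord : |a - b| ≤ 3 * δ := by
      have h0 := abs_coord_le_norm (a • gam θ₁ - b • gam θ₂) 2
      have h1' : (a • gam θ₁ - b • gam θ₂) 2 = (a - b) * (Real.sqrt 2)⁻¹ := by
        simp [gam_coord]; ring
      rw [h1', abs_mul, abs_of_nonneg (by positivity : (0:ℝ) ≤ (Real.sqrt 2)⁻¹)] at h0
      have h2' : |a - b| * (Real.sqrt 2)⁻¹ ≤ 2 * δ := le_trans h0 hD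
      have hinv : (2:ℝ)/3 ≤ (Real.sqrt 2)⁻¹ := by
        rw [show ((2:ℝ)/3) = (3/2:ℝ)⁻¹ by norm_num]
        exact inv_anti₀ (by norm_num) (by linarith)
      nlinarith [abs_nonneg (a - b)]
    have hdecomp : gam θ₁ - gam θ₂ =
        a⁻¹ • (a • gam θ₁ - b • gam θ₂) + ((b - a) / a) • gam θ₂ := by
      match_scalars <;> field_simp <;> ring
    have hAinv : |a|⁻¹ ≤ 10/9 := by
      rw [show ((10:ℝ)/9) = (9/10:ℝ)⁻¹ by norm_num]
      exact inv_anti₀ (by norm_num) hA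
    have hgam : ‖gam θ₁ - gam θ₂‖ ≤ 6 * δ := by
      calc ‖gam θ₁ - gam θ₂‖
          ≤ ‖a⁻¹ • (a • gam θ₁ - b • gam θ₂)‖ + ‖((b - a) / a) • gam θ₂‖ := by
            rw [hdecomp]; exact norm_add_le _ _
        _ = |a|⁻¹ * ‖a • gam θ₁ - b • gam θ₂‖ + |b - a| * |a|⁻¹ := by
            rw [norm_smul, norm_smul, norm_gam, Real.norm_eq_abs, Real.norm_eq_abs,
              abs_inv, abs_div, div_eq_mul_inv]
            ring
        _ ≤ (10/9) * (2 * δ) + (3 * δ) * (10/9) := by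
            have h3 : |b - a| = |a - b| := abs_sub_comm b a
            have hi : (0:ℝ) ≤ |a|⁻¹ := by positivity
            have hn : (0:ℝ) ≤ ‖a • gam θ₁ - b • gam θ₂‖ := norm_nonneg _
            nlinarith [abs_nonneg (a - b)]
        _ ≤ 6 * δ := by linarith
    rw [htarget]
    nlinarith [norm_nonneg (gam θ₁ - gam θ₂)]
  · -- large δ
    rw [htarget]
    have hn := norm_sub_le (gam θ₁) (gam θ₂)
    rw [norm_gam, norm_gam] at hn
    push_neg at hδ1
    nlinarith [norm_nonneg (gam θ₁ - gam θ₂), Real.sqrt_nonneg 2]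
end

section
/- There exists an absolute constant c > 0 with the following property. For every Lebesgue-measurable set H ⊂ [0, 2π) with H¹(H) = λ > 0, there exist measurable subsets H₁, H₂, H₃ ⊂ H such that H¹(H_j) ≥ c λ² for each j ∈ {1, 2, 3}, and dist(H_i, H_j) ≥ c λ for all 1 ≤ i < j ≤ 3. -/
open MeasureTheory Real

/-- There is an absolute constant `c > 0` such that every Lebesgue
measurable set `H ⊆ [0, 2π)` of measure `λ > 0` contains three measurable subsets
`H₁, H₂, H₃` with `H¹(H_j) ≥ c λ²` for each `j`, and `dist(H_i, H_j) ≥ c λ` for `i ≠ j`. -/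
theorem stmt12 :
    ∃ c : ℝ, 0 < c ∧
      ∀ (H : Set ℝ), H ⊆ Set.Ico (0 : ℝ) (2 * π) → MeasurableSet H →
        ∀ lam : ℝ, 0 < lam → volume H = ENNReal.ofReal lam →
          ∃ H₁ H₂ H₃ : Set ℝ,
            H₁ ⊆ H ∧ H₂ ⊆ H ∧ H₃ ⊆ H ∧
            MeasurableSet H₁ ∧ MeasurableSet H₂ ∧ MeasurableSet H₃ ∧
            ENNReal.ofReal (c * lam ^ 2) ≤ volume H₁ ∧
            ENNReal.ofReal (c * lam ^ 2) ≤ volume H₂ ∧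
            ENNReal.ofReal (c * lam ^ 2) ≤ volume H₃ ∧
            (∀ a ∈ H₁, ∀ b ∈ H₂, c * lam ≤ |a - b|) ∧
            (∀ a ∈ H₁, ∀ b ∈ H₃, c * lam ≤ |a - b|) ∧
            (∀ a ∈ H₂, ∀ b ∈ H₃, c * lam ≤ |a - b|) := by
  have hπ : 0 < π := Real.pi_pos
  have hπ4 : π ≤ 4 := Real.pi_le_four
  refine ⟨1/100, by norm_num, ?_⟩
  intro H hHsub hHm lam hlam hvol
  have hfin : volume H ≠ ⊤ := by rw [hvol]; exact ENNReal.ofReal_ne_top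
  -- lam ≤ 2π
  have hlam2π : lam ≤ 2 * π := by
    have h1 : volume H ≤ volume (Set.Ico (0:ℝ) (2*π)) := measure_mono hHsub
    rw [hvol, Real.volume_Ico] at h1
    have h2 : lam ≤ 2 * π - 0 :=
      (ENNReal.ofReal_le_ofReal_iff (by linarith)).mp (by simpa using h1)
    linarith
  set g := lam / 100 with hg
  have hgpos : 0 < g := by positivity
  set f : ℝ → ℝ := fun x => (volume (H ∩ Set.Iic x)).toReal with hf
  have hfinx : ∀ x, volume (H ∩ Set.Iic x) ≠ ⊤ := fun x =>
    ne_top_of_le_ne_top hfin (measure_mono Set.inter_subset_left)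
  have hsplit : ∀ a b : ℝ, a ≤ b →
      volume (H ∩ Set.Iic b) = volume (H ∩ Set.Iic a) + volume (H ∩ Set.Ioc a b) := by
    intro a b hab
    rw [← measure_union ?_ (hHm.inter measurableSet_Ioc)]
    · congr 1
      rw [← Set.inter_union_distrib_left, Set.Iic_union_Ioc_eq_Iic hab]
    · exact Set.disjoint_left.mpr fun x hx hx' => hx'.2.1.not_ge hx.2
  -- f is 1-Lipschitz
  have hdiff : ∀ a b : ℝ, a ≤ b → f b - f a = (volume (H ∩ Set.Ioc a b)).toReal := by
    intro a b hab
    have := hsplit a b hab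
    have h2 : (volume (H ∩ Set.Iic b)).toReal
        = (volume (H ∩ Set.Iic a)).toReal + (volume (H ∩ Set.Ioc a b)).toReal := by
      rw [this, ENNReal.toReal_add (hfinx a)
        (ne_top_of_le_ne_top hfin (measure_mono Set.inter_subset_left))]
    simp only [hf]
    linarith
  have hmono : Monotone f := by
    intro a b hab
    have := hdiff a b hab
    have h0 : 0 ≤ (volume (H ∩ Set.Ioc a b)).toReal := ENNReal.toReal_nonneg
    linarith
  have hlip : ∀ a b : ℝ, a ≤ b → f b - f a ≤ b - a := by
    intro a b hab
    rw [hdiff a b hab]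
    have h1 : volume (H ∩ Set.Ioc a b) ≤ volume (Set.Ioc a b) :=
      measure_mono Set.inter_subset_right
    have h2 := ENNReal.toReal_mono (by simp [Real.volume_Ioc]) h1
    rw [Real.volume_Ioc, ENNReal.toReal_ofReal (by linarith)] at h2
    linarith
  have hcont : Continuous f := by
    apply LipschitzWith.continuous (K := 1)
    apply LipschitzWith.of_dist_le_mul
    intro a b
    rw [Real.dist_eq, Real.dist_eq, NNReal.coe_one, one_mul]
    rcases le_total a b with hab | hab
    · have h1 := hlip a b hab
      have h2 := hmono hab
      rw [abs_sub_comm, abs_of_nonneg (by linarith), abs_of_nonpos (by linarith)]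
      linarith
    · have h1 := hlip b a hab
      have h2 := hmono hab
      rw [abs_of_nonneg (by linarith), abs_of_nonneg (by linarith)]
      linarith
  have hf0 : f 0 = 0 := by
    have hsub : H ∩ Set.Iic 0 ⊆ {0} := by
      intro x hx
      have := (hHsub hx.1).1
      have := hx.2
      simp only [Set.mem_singleton_iff]
      exact le_antisymm hx.2 (hHsub hx.1).1
    have : volume (H ∩ Set.Iic 0) = 0 :=
      le_antisymm (le_trans (measure_mono hsub) (by simp)) zero_le
    simp [hf, this]
  have hf2π : f (2*π) = lam := by
    have : H ∩ Set.Iic (2*π) = H := by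
      apply Set.inter_eq_left.mpr
      intro x hx
      exact le_of_lt (hHsub hx).2
    simp [hf, this, hvol, ENNReal.toReal_ofReal hlam.le]
  -- find x₁ with f x₁ = lam/3
  have hivt1 : lam/3 ∈ f '' Set.Icc 0 (2*π) := by
    apply intermediate_value_Icc (by linarith) hcont.continuousOn
    rw [hf0, hf2π]
    constructor <;> linarith
  obtain ⟨x₁, hx₁mem, hx₁⟩ := hivt1
  -- find x₂ with f x₂ = 2*lam/3
  have hivt2 : 2*lam/3 ∈ f '' Set.Icc x₁ (2*π) := by
    apply intermediate_value_Icc hx₁mem.2 hcont.continuousOn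
    rw [hx₁, hf2π]
    constructor <;> linarith
  obtain ⟨x₂, hx₂mem, hx₂⟩ := hivt2
  have hx₁₂ : x₁ ≤ x₂ := hx₂mem.1
  -- measure identities
  have hv₁ : volume (H ∩ Set.Iic x₁) = ENNReal.ofReal (lam/3) := by
    rw [← hx₁]; exact (ENNReal.ofReal_toReal (hfinx x₁)).symm
  have hv₂ : volume (H ∩ Set.Iic x₂) = ENNReal.ofReal (2*lam/3) := by
    rw [← hx₂]; exact (ENNReal.ofReal_toReal (hfinx x₂)).symm
  have hvmid : volume (H ∩ Set.Ioc x₁ x₂) = ENNReal.ofReal (lam/3) := by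
    have h := hsplit x₁ x₂ hx₁₂
    rw [hv₁, hv₂] at h
    have h' : volume (H ∩ Set.Ioc x₁ x₂) + ENNReal.ofReal (lam/3) = ENNReal.ofReal (2*lam/3) := by
      rw [add_comm]; exact h.symm
    have := ENNReal.eq_sub_of_add_eq ENNReal.ofReal_ne_top h'
    rw [this, ← ENNReal.ofReal_sub (q := lam/3) _ (by linarith)]
    congr 1; ring
  have hvtail : volume (H ∩ Set.Ioi x₂) = ENNReal.ofReal (lam/3) := by
    have hu : H = (H ∩ Set.Iic x₂) ∪ (H ∩ Set.Ioi x₂) := by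
      rw [← Set.inter_union_distrib_left, Set.Iic_union_Ioi, Set.inter_univ]
    have hdisj : Disjoint (H ∩ Set.Iic x₂) (H ∩ Set.Ioi x₂) :=
      Set.disjoint_left.mpr fun x hx hx' => hx'.2.not_ge (show x ≤ x₂ from hx.2)
    have h : volume H = volume (H ∩ Set.Iic x₂) + volume (H ∩ Set.Ioi x₂) := by
      conv_lhs => rw [hu]
      exact measure_union hdisj (hHm.inter measurableSet_Ioi)
    rw [hvol, hv₂] at h
    have h' : volume (H ∩ Set.Ioi x₂) + ENNReal.ofReal (2*lam/3) = ENNReal.ofReal lam := by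
      rw [add_comm]; exact h.symm
    have := ENNReal.eq_sub_of_add_eq ENNReal.ofReal_ne_top h'
    rw [this, ← ENNReal.ofReal_sub (q := 2*lam/3) _ (by linarith)]
    congr 1; ring
  -- the three sets
  refine ⟨H ∩ Set.Iic x₁, H ∩ Set.Icc (x₁ + g) x₂, H ∩ Set.Ici (x₂ + g),
    Set.inter_subset_left, Set.inter_subset_left, Set.inter_subset_left,
    hHm.inter measurableSet_Iic, hHm.inter measurableSet_Icc, hHm.inter measurableSet_Ici,
    ?_, ?_, ?_, ?_, ?_, ?_⟩
  · rw [hv₁]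
    apply ENNReal.ofReal_le_ofReal
    nlinarith
  · -- middle set
    have hcover : H ∩ Set.Ioc x₁ x₂ ⊆ (H ∩ Set.Icc (x₁ + g) x₂) ∪ Set.Ioo x₁ (x₁ + g) := by
      intro x hx
      rcases lt_or_ge x (x₁ + g) with h | h
      · exact Or.inr ⟨hx.2.1, h⟩
      · exact Or.inl ⟨hx.1, h, hx.2.2⟩
    have h1 : volume (H ∩ Set.Ioc x₁ x₂)
        ≤ volume (H ∩ Set.Icc (x₁ + g) x₂) + volume (Set.Ioo x₁ (x₁ + g)) :=
      le_trans (measure_mono hcover) (measure_union_le _ _)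
    rw [hvmid, Real.volume_Ioo, show x₁ + g - x₁ = g by ring] at h1
    have h2 : ENNReal.ofReal (lam/3) - ENNReal.ofReal g
        ≤ volume (H ∩ Set.Icc (x₁ + g) x₂) := tsub_le_iff_right.mpr h1
    calc ENNReal.ofReal (1/100 * lam ^ 2)
        ≤ ENNReal.ofReal (lam/3 - g) := by
          apply ENNReal.ofReal_le_ofReal; simp only [hg]; nlinarith
      _ = ENNReal.ofReal (lam/3) - ENNReal.ofReal g :=
          ENNReal.ofReal_sub _ hgpos.le
      _ ≤ _ := h2
  · -- right set
    have hcover : H ∩ Set.Ioi x₂ ⊆ (H ∩ Set.Ici (x₂ + g)) ∪ Set.Ioo x₂ (x₂ + g) := by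
      intro x hx
      rcases lt_or_ge x (x₂ + g) with h | h
      · exact Or.inr ⟨hx.2, h⟩
      · exact Or.inl ⟨hx.1, h⟩
    have h1 : volume (H ∩ Set.Ioi x₂)
        ≤ volume (H ∩ Set.Ici (x₂ + g)) + volume (Set.Ioo x₂ (x₂ + g)) :=
      le_trans (measure_mono hcover) (measure_union_le _ _)
    rw [hvtail, Real.volume_Ioo, show x₂ + g - x₂ = g by ring] at h1
    have h2 : ENNReal.ofReal (lam/3) - ENNReal.ofReal g
        ≤ volume (H ∩ Set.Ici (x₂ + g)) := tsub_le_iff_right.mpr h1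
    calc ENNReal.ofReal (1/100 * lam ^ 2)
        ≤ ENNReal.ofReal (lam/3 - g) := by
          apply ENNReal.ofReal_le_ofReal; simp only [hg]; nlinarith
      _ = ENNReal.ofReal (lam/3) - ENNReal.ofReal g :=
          ENNReal.ofReal_sub _ hgpos.le
      _ ≤ _ := h2
  · intro a ha b hb
    have h1 : a ≤ x₁ := ha.2
    have h2 : x₁ + g ≤ b := hb.2.1
    rw [abs_sub_comm, abs_of_nonneg (by linarith)]
    simp only [hg] at h2 ⊢
    linarith
  · intro a ha b hb
    have h1 : a ≤ x₁ := ha.2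
    have h2 : x₂ + g ≤ b := hb.2
    rw [abs_sub_comm, abs_of_nonneg (by linarith)]
    simp only [hg] at h2 ⊢
    linarith
  · intro a ha b hb
    have h1 : a ≤ x₂ := ha.2.2
    have h2 : x₂ + g ≤ b := hb.2
    rw [abs_sub_comm, abs_of_nonneg (by linarith)]
    simp only [hg] at h2 ⊢
    linarith
end
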